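/- Fix p ∈ [0,1] and e ∈ (0,1]. For ε > 0 define p₁(ε) = p·ε/e, ε₀(ε) = ε·(1−p)/(1−p₁(ε)), and G(ε) = (1−p₁(ε))·(1−4ε₀(ε)) + p₁(ε)·(1−2e)². Then lim_{ε→0⁺} (−log G(ε))/ε = 4(1−p·e). -/

import Mathlib

open Filter

/-- blowup rate for the single-Pauli-error example: with `p₁(ε) = p*ε/e`,
`ε₀(ε) = ε*(1-p)/(1-p₁(ε))` and `G(ε) = (1-p₁(ε))*(1-4*ε₀(ε)) + p₁(ε)*(1-2e)^2`,
one has `lim_{ε→0⁺} (-log G(ε))/ε = 4*(1 - p*e)`. -/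
theorem binary_cg_salem_single_pauli_blowup_rate
    (p e : ℝ) (hp : p ∈ Set.Icc (0 : ℝ) 1) (he : e ∈ Set.Ioc (0 : ℝ) 1) :
    Tendsto
      (fun ε : ℝ =>
        (-Real.log ((1 - p * ε / e) * (1 - 4 * (ε * (1 - p) / (1 - p * ε / e)))
          + (p * ε / e) * (1 - 2 * e) ^ 2)) / ε)
      (nhdsWithin 0 (Set.Ioi 0))
      (nhds (4 * (1 - p * e))) := by
  obtain ⟨hp0, hp1⟩ := hp
  obtain ⟨he0, he1⟩ := he
  set c : ℝ := 4 * (1 - p * e) with hc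
  -- the simplified limit
  have hd : HasDerivAt (fun x : ℝ => -Real.log (1 - c * x)) c 0 := by
    have h1 : HasDerivAt (fun x : ℝ => 1 - c * x) (-c) 0 := by
      simpa [Pi.sub_def] using ((hasDerivAt_const (0:ℝ) (1:ℝ)).sub ((hasDerivAt_id (0:ℝ)).const_mul c))
    have h2 := (Real.hasDerivAt_log (by norm_num : (1:ℝ) - c * 0 ≠ 0)).comp 0 h1
    have h3 := h2.neg
    simpa [Pi.neg_def, Function.comp_def] using h3
  have hslope := hasDerivAt_iff_tendsto_slope.mp hd
  have hbase : Tendsto (fun ε : ℝ => (-Real.log (1 - c * ε)) / ε)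
      (nhdsWithin 0 (Set.Ioi 0)) (nhds c) := by
    have hmono : nhdsWithin (0:ℝ) (Set.Ioi 0) ≤ nhdsWithin 0 {(0:ℝ)}ᶜ := by
      apply nhdsWithin_mono
      intro x hx
      exact ne_of_gt hx
    have := hslope.mono_left hmono
    refine this.congr fun x => ?_
    simp [slope, div_eq_inv_mul]
  -- eventual equality of the two functions
  have heq : ∀ᶠ ε in nhdsWithin (0:ℝ) (Set.Ioi 0),
      (-Real.log ((1 - p * ε / e) * (1 - 4 * (ε * (1 - p) / (1 - p * ε / e)))
          + (p * ε / e) * (1 - 2 * e) ^ 2)) / ε = (-Real.log (1 - c * ε)) / ε := by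
    filter_upwards [Ioo_mem_nhdsGT_of_mem (⟨le_refl 0, he0⟩ : (0:ℝ) ∈ Set.Ico 0 e)]
      with ε hε
    obtain ⟨hε0, hεe⟩ := hε
    have hne : (1 : ℝ) - p * ε / e ≠ 0 := by
      have h1 : p * ε ≤ ε := by
        nlinarith
      have h2 : p * ε / e < 1 := by
        rw [div_lt_one he0]
        linarith
      linarith
    have harg : (1 - p * ε / e) * (1 - 4 * (ε * (1 - p) / (1 - p * ε / e)))
          + (p * ε / e) * (1 - 2 * e) ^ 2 = 1 - c * ε := by
      have hne' : e - p * ε ≠ 0 := by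
        intro h
        apply hne
        field_simp
        linarith
      rw [hc]
      field_simp
      ring
    rw [harg]
  exact Tendsto.congr' (Filter.EventuallyEq.symm heq) hbase
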